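/- For a continuous domain X with the Scott topology, if a directed family 𝔇 of simple valuations satisfies 𝔇 ⇒_P ξ, then ξ ≤ sup 𝔇 in the pointwise order on valuations. -/

import Mathlib

open Set

/-- The specialization order on a topological space: `x ⊑ y` iff `x ∈ closure {y}`. -/
def sOrd (X : Type*) [TopologicalSpace X] (x y : X) : Prop := x ∈ closure {y}

/-- A directed subset `D`, viewed as a net indexed by itself, converges to `x`:
it is eventually in every open neighborhood of `x`. -/
def dconv (X : Type*) [TopologicalSpace X] (D : Set X) (x : X) : Prop :=
  D.Nonempty ∧ DirectedOn (sOrd X) D ∧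
    ∀ U : Set X, IsOpen U → x ∈ U → ∃ d ∈ D, ∀ e ∈ D, sOrd X d e → e ∈ U

/-- A subset `U` is directed open if every directed net converging to a point of `U`
meets `U`. -/
def dOpen (X : Type*) [TopologicalSpace X] (U : Set X) : Prop :=
  ∀ D x, dconv X D x → x ∈ U → (D ∩ U).Nonempty

open scoped ENNReal
open Classical in
/-- The point valuation `η_x`: `η_x U = 1` if `x ∈ U`, else `0`. -/
noncomputable def pv {X : Type*} (x : X) (U : Set X) : ℝ≥0∞ :=
  if x ∈ U then 1 else 0

open Classical in
/-- The simple valuation `Σ_{b ∈ B} r b · η_b`. -/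
noncomputable def simpleVal {X : Type*} (B : Finset X) (r : X → ℝ≥0∞) (U : Set X) : ℝ≥0∞ :=
  ∑ b ∈ B, if b ∈ U then r b else 0

/-- The pointwise order on valuations, comparing values on open sets. -/
def svLe {X : Type*} [TopologicalSpace X] (ξ η : Set X → ℝ≥0∞) : Prop :=
  ∀ U : Set X, IsOpen U → ξ U ≤ η U

/-- The set `SV(X)` of simple valuations on `X`. -/
def SVset (X : Type*) [TopologicalSpace X] : Set (Set X → ℝ≥0∞) :=
  {ξ | ∃ (B : Finset X) (r : X → ℝ≥0∞),
    (∀ b ∈ B, 0 < r b ∧ r b ≠ ⊤) ∧ ξ = fun U => simpleVal B r U}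

open Classical in
/-- The simple valuation `Σ_{b ∈ B} r' b · η_{d b}` obtained by moving each support
point `b` to `d b` and shrinking coefficients to `r' b`. -/
noncomputable def shiftVal {X : Type*} (B : Finset X) (d : X → X) (r' : X → ℝ≥0∞)
    (U : Set X) : ℝ≥0∞ :=
  ∑ b ∈ B, if d b ∈ U then r' b else 0

/-- The convergence relation `𝔇 ⇒_P ξ` on simple valuations: `𝔇` is a directed family
of simple valuations, `ξ = Σ_{b∈B} r_b η_b`, there are directed sets `D_b → b` in `X`,
and for every choice `d b ∈ D b` and every `r' b < r b` some member of `𝔇` dominates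
`Σ_{b∈B} r'_b η_{d b}`. -/
def PConv {X : Type*} [TopologicalSpace X] (𝔇 : Set (Set X → ℝ≥0∞))
    (ξ : Set X → ℝ≥0∞) : Prop :=
  𝔇 ⊆ SVset X ∧ 𝔇.Nonempty ∧ DirectedOn svLe 𝔇 ∧
    ∃ (B : Finset X) (r : X → ℝ≥0∞),
      (∀ b ∈ B, 0 < r b ∧ r b ≠ ⊤) ∧ (ξ = fun U => simpleVal B r U) ∧
      ∃ D : X → Set X, (∀ b ∈ B, dconv X (D b) b) ∧
        ∀ d : X → X, (∀ b ∈ B, d b ∈ D b) →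
          ∀ r' : X → ℝ≥0∞, (∀ b ∈ B, r' b < r b) →
            ∃ ξ' ∈ 𝔇, svLe (shiftVal B d r') ξ'

/-- `⇒_P`-convergence open subsets of `SV(X)`. -/
def POpen {X : Type*} [TopologicalSpace X] (𝔘 : Set (Set X → ℝ≥0∞)) : Prop :=
  𝔘 ⊆ SVset X ∧ ∀ 𝔇 ξ, PConv 𝔇 ξ → ξ ∈ 𝔘 → (𝔇 ∩ 𝔘).Nonempty

/-- The way-below relation on a poset: `a ≪ x` iff every directed set whose least
upper bound dominates `x` contains an element above `a`. -/
def wayBelow {X : Type*} [PartialOrder X] (a x : X) : Prop :=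
  ∀ D : Set X, D.Nonempty → DirectedOn (· ≤ ·) D →
    ∀ y : X, IsLUB D y → x ≤ y → ∃ d ∈ D, a ≤ d

/-- For a continuous domain `X` with the Scott topology, if a directed
family `𝔇` of simple valuations satisfies `𝔇 ⇒_P ξ`, then `ξ ≤ sup 𝔇` in the
pointwise order on valuations. -/
theorem stmt_19 {X : Type*} [PartialOrder X] [TopologicalSpace X]
    (hScott : ∀ U : Set X, IsOpen U ↔
      (IsUpperSet U ∧ ∀ D : Set X, D.Nonempty → DirectedOn (· ≤ ·) D →
        ∀ a : X, IsLUB D a → a ∈ U → (D ∩ U).Nonempty))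
    (hdcpo : ∀ D : Set X, D.Nonempty → DirectedOn (· ≤ ·) D → ∃ a : X, IsLUB D a)
    (hcont : ∀ x : X, ({a : X | wayBelow a x}).Nonempty ∧
      DirectedOn (· ≤ ·) {a : X | wayBelow a x} ∧ IsLUB {a : X | wayBelow a x} x)
    (𝔇 : Set (Set X → ℝ≥0∞)) (ξ : Set X → ℝ≥0∞) (h : PConv 𝔇 ξ) :
    ∀ U : Set X, IsOpen U → ξ U ≤ ⨆ ξ' ∈ 𝔇, ξ' U := by
  classical
  intro U hU
  obtain ⟨hsub, hne, hdir, B, r, hr, hξ, D, hD, hmain⟩ := h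
  apply ENNReal.le_of_forall_lt_one_mul_le
  intro c hc
  have hdchoice : ∀ b ∈ B, ∃ x ∈ D b, (b ∈ U → x ∈ U) := by
    intro b hb
    obtain ⟨hne', hdir', hconv⟩ := hD b hb
    by_cases hbU : b ∈ U
    · obtain ⟨d0, hd0, hd0'⟩ := hconv U hU hbU
      exact ⟨d0, hd0, fun _ => hd0' d0 hd0 (subset_closure rfl)⟩
    · obtain ⟨d0, hd0⟩ := hne'
      exact ⟨d0, hd0, fun h => absurd h hbU⟩
  choose! d hd1 hd2 using hdchoice
  have hr' : ∀ b ∈ B, c * r b < r b := by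
    intro b hb
    calc c * r b < 1 * r b := by
          rw [mul_comm c, mul_comm 1]
          exact ENNReal.mul_lt_mul_right (hr b hb).1.ne' (hr b hb).2 hc
      _ = r b := one_mul _
  obtain ⟨ξ', hξ'𝔇, hle⟩ := hmain d hd1 (fun b => c * r b) hr'
  calc c * ξ U = ∑ b ∈ B, if b ∈ U then c * r b else 0 := by
        rw [hξ]
        simp only [simpleVal, Finset.mul_sum, mul_ite, mul_zero]
    _ ≤ shiftVal B d (fun b => c * r b) U := by
        unfold shiftVal
        refine Finset.sum_le_sum fun b hb => ?_
        split_ifs with h1 h2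
        · exact le_rfl
        · exact absurd (hd2 b hb h1) h2
        · exact zero_le
        · exact le_refl _
    _ ≤ ξ' U := hle U hU
    _ ≤ ⨆ ξ' ∈ 𝔇, ξ' U := le_biSup (fun ξ' => ξ' U) hξ'𝔇
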